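/- Fix finite nonempty sets Θ, Ω, A, a utility function u : Θ × Ω × A → ℝ, and a probability distribution μ on Ω × Θ with μ(ω) > 0 for all ω. Then for every valid Pricing Outcomes menu with revenue R, there exists a valid Pricing Outcomes menu all of whose posteriors lie in the finite set Q*(u,μ) and whose revenue is at least R. -/

import Mathlib

open Finset Filter
open Topology

noncomputable section

section Poly

variable {E : Type*} [AddCommGroup E] [Module ℝ E] {ι : Type*} [Fintype ι]

lemma lin_line {f : E → ℝ} (hf : IsLinearMap ℝ f) (x y : E) (ε : ℝ) :
    f (x + ε • (x - y)) = f x + ε * (f x - f y) := by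
  rw [hf.map_add, hf.map_smul, hf.map_sub, smul_eq_mul]

lemma extreme_eq_of_tight {f : ι → E → ℝ} (hf : ∀ i, IsLinearMap ℝ (f i)) {b : ι → ℝ} {x y : E}
    (hx : x ∈ Set.extremePoints ℝ {z | ∀ i, f i z ≤ b i})
    (hy : ∀ i, f i y ≤ b i) (hty : ∀ i, f i x = b i → f i y = b i) : y = x := by
  obtain ⟨hxS, hext⟩ := hx
  have hev : ∀ i, ∀ᶠ ε : ℝ in 𝓝[>] 0, f i (x + ε • (x - y)) ≤ b i := by
    intro i
    rcases eq_or_lt_of_le (hxS i) with h | h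
    · have h2 := hty i h
      filter_upwards with ε
      rw [lin_line (hf i), h, h2]
      simp
    · have hcont : Tendsto (fun ε : ℝ => f i x + ε * (f i x - f i y)) (𝓝[>] 0) (𝓝 (f i x)) := by
        have h3 : Tendsto (fun ε : ℝ => f i x + ε * (f i x - f i y)) (𝓝 0)
            (𝓝 (f i x + 0 * (f i x - f i y))) :=
          ((tendsto_id.mul tendsto_const_nhds).const_add _)
        simpa using h3.mono_left nhdsWithin_le_nhds
      filter_upwards [hcont.eventually_le_const h] with ε hε
      rw [lin_line (hf i)]; exact hε
  obtain ⟨ε, hεall, hεpos⟩ := ((eventually_all.2 hev).and self_mem_nhdsWithin).exists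
  have h1ε : (0:ℝ) < 1 + ε := by linarith
  have hseg : x ∈ openSegment ℝ y (x + ε • (x - y)) := by
    refine ⟨ε / (1 + ε), 1 / (1 + ε), by positivity, by positivity,
      by rw [← add_div, add_comm, div_self h1ε.ne'], ?_⟩
    match_scalars <;> (field_simp; try ring)
  exact (@hext y hy _ hεall hseg)

lemma finite_extremePoints {f : ι → E → ℝ} (hf : ∀ i, IsLinearMap ℝ (f i)) (b : ι → ℝ) :
    (Set.extremePoints ℝ {z | ∀ i, f i z ≤ b i}).Finite := by
  classical
  have hinj : Set.InjOn (fun x => (univ.filter fun i => f i x = b i : Finset ι))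
      (Set.extremePoints ℝ {z | ∀ i, f i z ≤ b i}) := by
    intro p hp q hq hpq
    refine extreme_eq_of_tight hf hq hp.1 fun i hi => ?_
    simp only at hpq
    have h2 : i ∈ univ.filter fun j => f j q = b j := by simp [hi]
    rw [← hpq] at h2
    simpa using h2
  exact Set.Finite.of_finite_image (Set.toFinite _) hinj

end Poly

variable {Θ Ω A : Type*}

/-- `p` is a probability distribution on the finite set `Ω`. -/
def IsDist [Fintype Ω] (p : Ω → ℝ) : Prop :=
  (∀ ω, 0 ≤ p ω) ∧ ∑ ω, p ω = 1

/-- `μ` is a joint probability distribution on `Ω × Θ`. -/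
def IsJoint [Fintype Ω] [Fintype Θ] (μ : Ω → Θ → ℝ) : Prop :=
  (∀ ω θ, 0 ≤ μ ω θ) ∧ ∑ ω, ∑ θ, μ ω θ = 1

/-- The marginal `μ(ω) = ∑_θ μ(ω,θ)` of a joint distribution. -/
def margO [Fintype Θ] (μ : Ω → Θ → ℝ) (ω : Ω) : ℝ := ∑ θ, μ ω θ

/-- The marginal `μ(θ) = ∑_ω μ(ω,θ)` of a joint distribution. -/
def margT [Fintype Ω] (μ : Ω → Θ → ℝ) (θ : Θ) : ℝ := ∑ ω, μ ω θ

/-- The value function `v_θ(q) = max_{a ∈ A} ∑_ω q(ω)·u(θ,ω,a)`. -/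
def vfun [Fintype Ω] [Fintype A] [Nonempty A] (u : Θ → Ω → A → ℝ) (θ : Θ) (q : Ω → ℝ) : ℝ :=
  univ.sup' univ_nonempty fun a => ∑ ω, q ω * u θ ω a

/-- The matrix-vector product `D_θ q`, where `D_θ` is the diagonal matrix with entries
`μ(θ|ω) = μ(ω,θ)/μ(ω)`. -/
def Dq [Fintype Θ] (μ : Ω → Θ → ℝ) (θ : Θ) (q : Ω → ℝ) : Ω → ℝ :=
  fun ω => μ ω θ / margO μ ω * q ω

/-- `1ᵀ D_θ q`. -/
def onesD [Fintype Θ] [Fintype Ω] (μ : Ω → Θ → ℝ) (θ : Θ) (q : Ω → ℝ) : ℝ :=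
  ∑ ω, Dq μ θ q ω

/-- A feasible signal-representation for prior `pr`: a finitely supported distribution over
posteriors (each posterior being a distribution on `Ω`) averaging to the prior. -/
def FeasRep [Fintype Ω] (pr : Ω → ℝ) (x : (Ω → ℝ) →₀ ℝ) : Prop :=
  (∀ q ∈ x.support, IsDist q) ∧ (∀ q, 0 ≤ x q) ∧
  (∑ q ∈ x.support, x q = 1) ∧ ∀ ω, ∑ q ∈ x.support, x q * q ω = pr ω

variable [Fintype Θ] [Fintype Ω] [Fintype A] [Nonempty A]

/-- Expected value `∑_q v_θ(D_θ q)·x(q)` that a type-`θ` buyer gets from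
signal representation `x`. -/
def PMutil (u : Θ → Ω → A → ℝ) (μ : Ω → Θ → ℝ) (θ : Θ) (x : (Ω → ℝ) →₀ ℝ) : ℝ :=
  ∑ q ∈ x.support, vfun u θ (Dq μ θ q) * x q

/-- Validity (IR and IC) of a Pricing Mappings menu `{(x_θ, t_θ)}`. -/
def PMvalid (u : Θ → Ω → A → ℝ) (μ : Ω → Θ → ℝ)
    (x : Θ → ((Ω → ℝ) →₀ ℝ)) (t : Θ → ℝ) : Prop :=
  (∀ θ, FeasRep (margO μ) (x θ)) ∧ (∀ θ, 0 ≤ t θ) ∧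
  (∀ θ, vfun u θ (Dq μ θ (margO μ)) ≤ PMutil u μ θ (x θ) - margT μ θ * t θ) ∧
  (∀ θ θ', θ' ≠ θ →
    PMutil u μ θ (x θ') - margT μ θ * t θ' ≤ PMutil u μ θ (x θ) - margT μ θ * t θ)

/-- Revenue `∑_θ μ(θ)·t_θ` of a Pricing Mappings menu. -/
def PMrev (μ : Ω → Θ → ℝ) (t : Θ → ℝ) : ℝ := ∑ θ, margT μ θ * t θ

/-- `R_c(u,μ)`: the supremum of revenues of valid Pricing Mappings menus. -/
def Rc (u : Θ → Ω → A → ℝ) (μ : Ω → Θ → ℝ) : ℝ :=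
  sSup {r | ∃ x t, PMvalid u μ x t ∧ r = PMrev μ t}

/-- Net utility `∑_q [v_θ(D_θ q)·x(q) − (1ᵀD_θ q)·t̃(q)]` of a type-`θ` buyer
from a Pricing Outcomes contract `(x, tt)`. -/
def POutil (u : Θ → Ω → A → ℝ) (μ : Ω → Θ → ℝ) (θ : Θ)
    (x tt : (Ω → ℝ) →₀ ℝ) : ℝ :=
  ∑ q ∈ x.support ∪ tt.support,
    (vfun u θ (Dq μ θ q) * x q - onesD μ θ q * tt q)

/-- Validity (feasibility, payments supported on signals, IR and IC) of a Pricing Outcomes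
menu `{(x_θ, t̃_θ)}`. -/
def POvalid (u : Θ → Ω → A → ℝ) (μ : Ω → Θ → ℝ)
    (x tt : Θ → ((Ω → ℝ) →₀ ℝ)) : Prop :=
  (∀ θ, FeasRep (margO μ) (x θ)) ∧ (∀ θ, (tt θ).support ⊆ (x θ).support) ∧
  (∀ θ, vfun u θ (Dq μ θ (margO μ)) ≤ POutil u μ θ (x θ) (tt θ)) ∧
  (∀ θ θ', θ' ≠ θ →
    POutil u μ θ (x θ') (tt θ') ≤ POutil u μ θ (x θ) (tt θ))

/-- Revenue `∑_θ ∑_q (1ᵀD_θ q)·t̃_θ(q)` of a Pricing Outcomes menu. -/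
def POrev (μ : Ω → Θ → ℝ) (tt : Θ → ((Ω → ℝ) →₀ ℝ)) : ℝ :=
  ∑ θ, ∑ q ∈ (tt θ).support, onesD μ θ q * tt θ q

/-- `R(u,μ)`: the supremum of revenues of valid Pricing Outcomes menus. -/
def Rfull (u : Θ → Ω → A → ℝ) (μ : Ω → Θ → ℝ) : ℝ :=
  sSup {r | ∃ x tt, POvalid u μ x tt ∧ r = POrev μ tt}

/-- `R_p(u,μ)`: the supremum of revenues of valid Pricing Outcomes menus with no positive
transfers to the buyer, i.e. all payments nonnegative. -/
def Rp (u : Θ → Ω → A → ℝ) (μ : Ω → Θ → ℝ) : ℝ :=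
  sSup {r | ∃ x tt, POvalid u μ x tt ∧ (∀ θ q, 0 ≤ tt θ q) ∧ r = POrev μ tt}

/-- `max_a u(θ,ω,a)`. -/
def maxU (u : Θ → Ω → A → ℝ) (θ : Θ) (ω : Ω) : ℝ :=
  univ.sup' univ_nonempty fun a => u θ ω a

/-- The buyer surplus
`σ(θ) = ∑_ω μ(ω|θ)·max_a u(θ,ω,a) − max_a ∑_ω μ(ω|θ)·u(θ,ω,a)`. -/
def surplus (u : Θ → Ω → A → ℝ) (μ : Ω → Θ → ℝ) (θ : Θ) : ℝ :=
  ∑ ω, μ ω θ / margT μ θ * maxU u θ ω -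
    univ.sup' univ_nonempty fun a => ∑ ω, μ ω θ / margT μ θ * u θ ω a

/-- The full surplus `∑_θ μ(θ)·σ(θ)`. -/
def fullSurplus (u : Θ → Ω → A → ℝ) (μ : Ω → Θ → ℝ) : ℝ :=
  ∑ θ, margT μ θ * surplus u μ θ

/-- The sealed-envelope revenue `R_e(u,μ) = sup_{t ≥ 0} t·∑_{θ : μ(θ)>0, σ(θ) ≥ t} μ(θ)`. -/
def Re (u : Θ → Ω → A → ℝ) (μ : Ω → Θ → ℝ) : ℝ :=
  sSup {r | ∃ t : ℝ, 0 ≤ t ∧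
    r = t * ∑ θ, (if 0 < margT μ θ ∧ t ≤ surplus u μ θ then margT μ θ else 0)}

/-- The cell of the simplex on which, for each type `θ`, action `α θ` is optimal:
on this polytope every `v_θ` is linear. -/
def cellPM (u : Θ → Ω → A → ℝ) (α : Θ → A) : Set (Ω → ℝ) :=
  {q | IsDist q ∧ ∀ θ a, ∑ ω, q ω * u θ ω a ≤ ∑ ω, q ω * u θ ω (α θ)}

/-- `Q*(u)`: the set of vertices (extreme points) of the cells of the partition of the simplex
into polytopes on which every `v_θ` is linear. -/
def Qstar (u : Θ → Ω → A → ℝ) : Set (Ω → ℝ) :=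
  ⋃ α : Θ → A, Set.extremePoints ℝ (cellPM u α)

/-- The cell of the simplex on which, for each type `θ`, action `α θ` is optimal for the
transformed posterior `D_θ q`: on this polytope every `q ↦ v_θ(D_θ q)` is linear. -/
def cellPO (u : Θ → Ω → A → ℝ) (μ : Ω → Θ → ℝ) (α : Θ → A) : Set (Ω → ℝ) :=
  {q | IsDist q ∧ ∀ θ a, ∑ ω, Dq μ θ q ω * u θ ω a ≤ ∑ ω, Dq μ θ q ω * u θ ω (α θ)}

/-- `Q*(u,μ)`: the set of vertices (extreme points) of the cells of the partition of the simplex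
into polytopes on which every `q ↦ v_θ(D_θ q)` is linear. -/
def QstarD (u : Θ → Ω → A → ℝ) (μ : Ω → Θ → ℝ) : Set (Ω → ℝ) :=
  ⋃ α : Θ → A, Set.extremePoints ℝ (cellPO u μ α)

/-- The point mass at `ω`, as an element of `Δ(Ω)`. -/
def deltaP [DecidableEq Ω] (ω : Ω) : Ω → ℝ := fun ω' => if ω' = ω then 1 else 0

/-- The full-revelation signal representation: posterior `δ_ω` with probability `μ(ω)`. -/
def fullX [DecidableEq Ω] (μ : Ω → Θ → ℝ) : (Ω → ℝ) →₀ ℝ :=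
  ∑ ω, Finsupp.single (deltaP ω) (margO μ ω)

/-- The full-revelation payment function: `t̃(δ_ω) = μ(ω)·t(ω)`. -/
def fullT [DecidableEq Ω] (μ : Ω → Θ → ℝ) (t : Ω → ℝ) : (Ω → ℝ) →₀ ℝ :=
  ∑ ω, Finsupp.single (deltaP ω) (margO μ ω * t ω)


section Cell

variable {Θ Ω A : Type*} [Fintype Θ] [Fintype Ω] [Fintype A] [Nonempty A]

/-- The constraint functions cutting out `cellPO`. -/
def cellF (u : Θ → Ω → A → ℝ) (μ : Ω → Θ → ℝ) (α : Θ → A) :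
    (Ω ⊕ Bool) ⊕ Θ × A → (Ω → ℝ) → ℝ
  | .inl (.inl ω) => fun q => -q ω
  | .inl (.inr true) => fun q => ∑ ω, q ω
  | .inl (.inr false) => fun q => -∑ ω, q ω
  | .inr (θ, a) => fun q => ∑ ω, Dq μ θ q ω * (u θ ω a - u θ ω (α θ))

/-- The constraint bounds cutting out `cellPO`. -/
def cellB : (Ω ⊕ Bool) ⊕ Θ × A → ℝ
  | .inl (.inr true) => 1
  | .inl (.inr false) => -1
  | _ => 0

lemma cellF_linear (u : Θ → Ω → A → ℝ) (μ : Ω → Θ → ℝ) (α : Θ → A) :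
    ∀ i, IsLinearMap ℝ (cellF u μ α i) := by
  rintro ((ω | b) | ⟨θ, a⟩)
  · exact ⟨fun p r => by simp [cellF]; try ring, fun c p => by simp [cellF, smul_eq_mul]; try ring⟩
  · cases b
    · exact ⟨fun p r => by simp [cellF, Finset.sum_add_distrib]; try ring,
        fun c p => by simp [cellF, smul_eq_mul, Finset.mul_sum]; try ring⟩
    · exact ⟨fun p r => by simp [cellF, Finset.sum_add_distrib],
        fun c p => by simp [cellF, smul_eq_mul, Finset.mul_sum]⟩
  · constructor
    · intro p r
      simp only [cellF, Dq, Pi.add_apply]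
      rw [← Finset.sum_add_distrib]
      exact Finset.sum_congr rfl fun ω _ => by ring
    · intro c p
      simp only [cellF, Dq, Pi.smul_apply, smul_eq_mul]
      rw [Finset.mul_sum]
      exact Finset.sum_congr rfl fun ω _ => by ring

lemma cellF_continuous (u : Θ → Ω → A → ℝ) (μ : Ω → Θ → ℝ) (α : Θ → A) :
    ∀ i, Continuous (cellF u μ α i) := by
  rintro ((ω | b) | ⟨θ, a⟩)
  · exact (continuous_apply ω).neg
  · cases b
    · exact (continuous_finset_sum _ fun ω _ => continuous_apply ω).neg
    · exact continuous_finset_sum _ fun ω _ => continuous_apply ω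
  · exact continuous_finset_sum _ fun ω _ =>
      (continuous_const.mul (continuous_apply ω)).mul continuous_const

lemma sum_sub_mul (g : Ω → ℝ) (c d : Ω → ℝ) :
    ∑ ω, g ω * (c ω - d ω) = (∑ ω, g ω * c ω) - ∑ ω, g ω * d ω := by
  rw [← Finset.sum_sub_distrib]
  exact Finset.sum_congr rfl fun ω _ => by ring

lemma cellPO_eq (u : Θ → Ω → A → ℝ) (μ : Ω → Θ → ℝ) (α : Θ → A) :
    cellPO u μ α = {q | ∀ i, cellF u μ α i q ≤ cellB i} := by
  ext q
  simp only [cellPO, Set.mem_setOf_eq, IsDist]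
  constructor
  · rintro ⟨⟨h0, h1⟩, h2⟩ i
    rcases i with ((ω | b) | ⟨θ, a⟩)
    · simpa [cellF, cellB] using h0 ω
    · cases b <;> simp [cellF, cellB, h1]
    · simp only [cellF, cellB]
      rw [sum_sub_mul (fun ω => Dq μ θ q ω)]
      have := h2 θ a
      linarith
  · intro h
    refine ⟨⟨fun ω => ?_, ?_⟩, fun θ a => ?_⟩
    · simpa [cellF, cellB] using h (.inl (.inl ω))
    · have ht := h (.inl (.inr true)); have hf := h (.inl (.inr false))
      simp only [cellF, cellB] at ht hf
      linarith
    · have := h (.inr (θ, a))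
      simp only [cellF, cellB] at this
      rw [sum_sub_mul (fun ω => Dq μ θ q ω)] at this
      linarith

lemma cellPO_isDist (u : Θ → Ω → A → ℝ) (μ : Ω → Θ → ℝ) (α : Θ → A) {q : Ω → ℝ}
    (h : q ∈ cellPO u μ α) : IsDist q := h.1

lemma cellPO_convex (u : Θ → Ω → A → ℝ) (μ : Ω → Θ → ℝ) (α : Θ → A) :
    Convex ℝ (cellPO u μ α) := by
  rw [cellPO_eq]
  have : {q : Ω → ℝ | ∀ i, cellF u μ α i q ≤ cellB i} =
      ⋂ i, {q : Ω → ℝ | cellF u μ α i q ≤ cellB i} := by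
    ext q; simp
  rw [this]
  exact convex_iInter fun i => convex_halfSpace_le (cellF_linear u μ α i) _

lemma cellPO_isCompact (u : Θ → Ω → A → ℝ) (μ : Ω → Θ → ℝ) (α : Θ → A) :
    IsCompact (cellPO u μ α) := by
  have hclosed : IsClosed (cellPO u μ α) := by
    rw [cellPO_eq]
    have : {q : Ω → ℝ | ∀ i, cellF u μ α i q ≤ cellB i} =
        ⋂ i, {q : Ω → ℝ | cellF u μ α i q ≤ cellB i} := by
      ext q; simp
    rw [this]
    exact isClosed_iInter fun i => isClosed_le (cellF_continuous u μ α i) continuous_const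
  refine IsCompact.of_isClosed_subset (isCompact_univ_pi fun _ : Ω => (isCompact_Icc : IsCompact (Set.Icc (0:ℝ) 1))) hclosed ?_
  intro q hq
  obtain ⟨⟨h0, h1⟩, -⟩ := hq
  intro ω _
  refine ⟨h0 ω, ?_⟩
  calc q ω ≤ ∑ ω', q ω' := Finset.single_le_sum (fun i _ => h0 i) (mem_univ ω)
  _ = 1 := h1

lemma cellPO_extreme_finite (u : Θ → Ω → A → ℝ) (μ : Ω → Θ → ℝ) (α : Θ → A) :
    (Set.extremePoints ℝ (cellPO u μ α)).Finite := by
  rw [cellPO_eq]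
  exact finite_extremePoints (cellF_linear u μ α) _

lemma QstarD_finite (u : Θ → Ω → A → ℝ) (μ : Ω → Θ → ℝ) : (QstarD u μ).Finite :=
  Set.finite_iUnion fun α => cellPO_extreme_finite u μ α

lemma vfun_eq_of_mem_cell (u : Θ → Ω → A → ℝ) (μ : Ω → Θ → ℝ) (α : Θ → A) {q : Ω → ℝ}
    (h : q ∈ cellPO u μ α) (θ : Θ) :
    vfun u θ (Dq μ θ q) = ∑ ω, Dq μ θ q ω * u θ ω (α θ) := by
  refine le_antisymm (Finset.sup'_le _ _ fun a _ => h.2 θ a) ?_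
  exact Finset.le_sup' (fun a => ∑ ω, Dq μ θ q ω * u θ ω a) (mem_univ (α θ))

lemma decompose (u : Θ → Ω → A → ℝ) (μ : Ω → Θ → ℝ) {q : Ω → ℝ} (hq : IsDist q) :
    ∃ (Ef : Finset (Ω → ℝ)) (w : (Ω → ℝ) → ℝ),
      (↑Ef ⊆ QstarD u μ) ∧ (∀ e ∈ Ef, IsDist e) ∧ (∀ e ∈ Ef, 0 ≤ w e) ∧
      (∑ e ∈ Ef, w e = 1) ∧ (∀ ω, ∑ e ∈ Ef, w e * e ω = q ω) ∧
      (∀ θ, ∑ e ∈ Ef, w e * vfun u θ (Dq μ θ e) = vfun u θ (Dq μ θ q)) := by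
  classical
  have hα : ∀ θ : Θ, ∃ a : A, ∀ a', ∑ ω, Dq μ θ q ω * u θ ω a' ≤ ∑ ω, Dq μ θ q ω * u θ ω a := by
    intro θ
    obtain ⟨a, -, ha⟩ := Finset.exists_mem_eq_sup' univ_nonempty
      (fun a => ∑ ω, Dq μ θ q ω * u θ ω a)
    exact ⟨a, fun a' => by
      rw [← ha]
      exact Finset.le_sup' (fun a => ∑ ω, Dq μ θ q ω * u θ ω a) (mem_univ a')⟩
  choose α hαmax using hα
  have hqS : q ∈ cellPO u μ α := ⟨hq, fun θ a => hαmax θ a⟩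
  have hfin := cellPO_extreme_finite u μ α
  have hhull : cellPO u μ α = convexHull ℝ (Set.extremePoints ℝ (cellPO u μ α)) := by
    have h1 := closure_convexHull_extremePoints (cellPO_isCompact u μ α) (cellPO_convex u μ α)
    exact h1.symm.trans (Set.Finite.isCompact_convexHull (𝕜 := ℝ) hfin).isClosed.closure_eq
  set Ef := hfin.toFinset with hEf
  have hEfcoe : (↑Ef : Set (Ω → ℝ)) = Set.extremePoints ℝ (cellPO u μ α) := hfin.coe_toFinset
  have hqhull : q ∈ convexHull ℝ (↑Ef : Set (Ω → ℝ)) := by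
    rw [hEfcoe, ← hhull]; exact hqS
  rw [Finset.convexHull_eq] at hqhull
  obtain ⟨w, hw0, hw1, hwq⟩ := hqhull
  rw [Finset.centerMass_eq_of_sum_1 _ _ hw1] at hwq
  have hmem : ∀ e ∈ Ef, e ∈ cellPO u μ α := fun e he => by
    have : e ∈ Set.extremePoints ℝ (cellPO u μ α) := by
      rw [← hEfcoe]; exact_mod_cast he
    exact this.1
  have hbary : ∀ ω, ∑ e ∈ Ef, w e * e ω = q ω := by
    intro ω
    have := congrFun hwq ω
    simpa [Finset.sum_apply, smul_eq_mul] using this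
  refine ⟨Ef, w, ?_, fun e he => (hmem e he).1, hw0, hw1, hbary, ?_⟩
  · rw [hEfcoe]
    exact Set.subset_iUnion (fun α' => Set.extremePoints ℝ (cellPO u μ α')) α
  · intro θ
    have hstep : ∀ e ∈ Ef, w e * vfun u θ (Dq μ θ e) =
        ∑ ω, (μ ω θ / margO μ ω * u θ ω (α θ)) * (w e * e ω) := by
      intro e he
      rw [vfun_eq_of_mem_cell u μ α (hmem e he) θ, Finset.mul_sum]
      exact Finset.sum_congr rfl fun ω _ => by simp only [Dq]; ring
    rw [Finset.sum_congr rfl hstep, Finset.sum_comm, vfun_eq_of_mem_cell u μ α hqS θ]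
    refine Finset.sum_congr rfl fun ω _ => ?_
    rw [← Finset.mul_sum, hbary ω]
    simp only [Dq]; ring

end Cell

section Menu

variable {Θ Ω A : Type*} [Fintype Θ] [Fintype Ω] [Fintype A] [Nonempty A]

/-- `∑_q g(q)·z(q)` for a finitely supported `z`. -/
def lsum (g : (Ω → ℝ) → ℝ) (z : (Ω → ℝ) →₀ ℝ) : ℝ := z.sum fun q c => g q * c

lemma lsum_eq_sum_subset {g : (Ω → ℝ) → ℝ} {z : (Ω → ℝ) →₀ ℝ} {s : Finset (Ω → ℝ)}
    (hs : z.support ⊆ s) : lsum g z = ∑ q ∈ s, g q * z q :=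
  Finsupp.sum_of_support_subset z hs _ (fun q _ => mul_zero (g q))

lemma lsum_single (g : (Ω → ℝ) → ℝ) (e : Ω → ℝ) (c : ℝ) :
    lsum g (Finsupp.single e c) = g e * c :=
  Finsupp.sum_single_index (mul_zero _)

lemma lsum_finset_sum (g : (Ω → ℝ) → ℝ) {κ : Type*} (s : Finset κ) (F : κ → (Ω → ℝ) →₀ ℝ) :
    lsum g (∑ k ∈ s, F k) = ∑ k ∈ s, lsum g (F k) := by
  classical
  induction s using Finset.cons_induction with
  | empty => simp [lsum]
  | cons k s hk ih =>
    rw [Finset.sum_cons, Finset.sum_cons, ← ih]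
    exact Finsupp.sum_add_index' (fun q => mul_zero (g q)) (fun q c1 c2 => mul_add (g q) c1 c2)

lemma lsum_smul (g : (Ω → ℝ) → ℝ) (c : ℝ) (z : (Ω → ℝ) →₀ ℝ) :
    lsum g (c • z) = c * lsum g z := by
  rw [lsum, Finsupp.sum_smul_index' (fun q => mul_zero (g q)), lsum, Finsupp.mul_sum]
  exact Finsupp.sum_congr fun q _ => by rw [smul_eq_mul]; ring

lemma POutil_eq (u : Θ → Ω → A → ℝ) (μ : Ω → Θ → ℝ) (θ : Θ) (x tt : (Ω → ℝ) →₀ ℝ) :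
    POutil u μ θ x tt = lsum (fun q => vfun u θ (Dq μ θ q)) x - lsum (onesD μ θ) tt := by
  classical
  rw [POutil, Finset.sum_sub_distrib,
    ← lsum_eq_sum_subset (Finset.subset_union_left),
    ← lsum_eq_sum_subset (Finset.subset_union_right)]

lemma POrev_eq (μ : Ω → Θ → ℝ) (tt : Θ → ((Ω → ℝ) →₀ ℝ)) :
    POrev μ tt = ∑ θ, lsum (onesD μ θ) (tt θ) := rfl

lemma onesD_comb (μ : Ω → Θ → ℝ) (θ : Θ) {Ef : Finset (Ω → ℝ)} {w : (Ω → ℝ) → ℝ} {q : Ω → ℝ}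
    (hbary : ∀ ω, ∑ e ∈ Ef, w e * e ω = q ω) :
    ∑ e ∈ Ef, w e * onesD μ θ e = onesD μ θ q := by
  simp only [onesD, Dq, Finset.mul_sum]
  rw [Finset.sum_comm]
  refine Finset.sum_congr rfl fun ω _ => ?_
  rw [← hbary ω, Finset.mul_sum]
  exact Finset.sum_congr rfl fun e _ => by ring

end Menu

/-- Interesting posteriors, correlated case. For any joint distribution `μ`
with positive `Ω`-marginal, `Q*(u,μ)` is a finite set and any valid Pricing Outcomes menu can
be replaced by a valid Pricing Outcomes menu whose posteriors all lie in `Q*(u,μ)` with at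
least the same revenue. -/
theorem interesting_posteriors_correlated (u : Θ → Ω → A → ℝ) (μ : Ω → Θ → ℝ)
    (hμ : IsJoint μ) (hO : ∀ ω, 0 < margO μ ω) :
    (QstarD u μ).Finite ∧
    ∀ x tt, POvalid u μ x tt →
      ∃ x' tt', POvalid u μ x' tt' ∧
        (∀ θ, ∀ q ∈ (x' θ).support, q ∈ QstarD u μ) ∧
        POrev μ tt ≤ POrev μ tt' := by
  classical
  refine ⟨QstarD_finite u μ, ?_⟩
  intro x tt hval
  obtain ⟨hfeas, hsupp, hIR, hIC⟩ := hval
  have H : ∀ θ (q : Ω → ℝ), ∃ (Ef : Finset (Ω → ℝ)) (w : (Ω → ℝ) → ℝ),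
      q ∈ (x θ).support →
        (↑Ef ⊆ QstarD u μ) ∧ (∀ e ∈ Ef, IsDist e) ∧ (∀ e ∈ Ef, 0 ≤ w e) ∧
        (∑ e ∈ Ef, w e = 1) ∧ (∀ ω, ∑ e ∈ Ef, w e * e ω = q ω) ∧
        (∀ θ'', ∑ e ∈ Ef, w e * vfun u θ'' (Dq μ θ'' e) = vfun u θ'' (Dq μ θ'' q)) := by
    intro θ q
    by_cases hq : q ∈ (x θ).support
    · obtain ⟨Ef, w, h1, h2, h3, h4, h5, h6⟩ := decompose u μ ((hfeas θ).1 q hq)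
      exact ⟨Ef, w, fun _ => ⟨h1, h2, h3, h4, h5, h6⟩⟩
    · exact ⟨∅, 0, fun h => absurd h hq⟩
  choose Ef w hEw using H
  set y : Θ → (Ω → ℝ) → ((Ω → ℝ) →₀ ℝ) :=
    fun θ q => ∑ e ∈ Ef θ q, Finsupp.single e (w θ q e) with hy
  set x' : Θ → ((Ω → ℝ) →₀ ℝ) := fun θ => ∑ q ∈ (x θ).support, x θ q • y θ q with hx'
  set tt' : Θ → ((Ω → ℝ) →₀ ℝ) := fun θ => ∑ q ∈ (x θ).support, tt θ q • y θ q with htt'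
  have hylsum : ∀ θ q (g : (Ω → ℝ) → ℝ), lsum g (y θ q) = ∑ e ∈ Ef θ q, g e * w θ q e := by
    intro θ q g
    simp only [hy]
    rw [lsum_finset_sum]
    exact Finset.sum_congr rfl fun e _ => lsum_single g e _
  have hx'lsum : ∀ θ (g : (Ω → ℝ) → ℝ),
      lsum g (x' θ) = ∑ q ∈ (x θ).support, x θ q * ∑ e ∈ Ef θ q, g e * w θ q e := by
    intro θ g
    simp only [hx']
    rw [lsum_finset_sum]
    exact Finset.sum_congr rfl fun q hq => by rw [lsum_smul, hylsum]
  have htt'lsum : ∀ θ (g : (Ω → ℝ) → ℝ),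
      lsum g (tt' θ) = ∑ q ∈ (x θ).support, tt θ q * ∑ e ∈ Ef θ q, g e * w θ q e := by
    intro θ g
    simp only [htt']
    rw [lsum_finset_sum]
    exact Finset.sum_congr rfl fun q hq => by rw [lsum_smul, hylsum]
  have hysupp : ∀ θ q, (y θ q).support ⊆ Ef θ q := by
    intro θ q
    simp only [hy]
    refine Finsupp.support_finset_sum.trans ?_
    intro e' he'
    rw [Finset.mem_biUnion] at he'
    obtain ⟨e, he, he'2⟩ := he'
    have h3 := Finsupp.support_single_subset he'2
    rw [Finset.mem_singleton] at h3
    exact h3 ▸ he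
  have hmem : ∀ θ q', q' ∈ (x' θ).support → ∃ q ∈ (x θ).support, q' ∈ Ef θ q := by
    intro θ q' h
    simp only [hx'] at h
    obtain ⟨q, hq, hq'⟩ := Finset.mem_biUnion.1 (Finsupp.support_finset_sum h)
    exact ⟨q, hq, hysupp θ q (Finsupp.support_smul hq')⟩
  have hynn : ∀ θ q, q ∈ (x θ).support → ∀ q', 0 ≤ y θ q q' := by
    intro θ q hq q'
    obtain ⟨-, -, hw0, -, -, -⟩ := hEw θ q hq
    simp only [hy, Finsupp.finset_sum_apply, Finsupp.single_apply]
    refine Finset.sum_nonneg fun e he => ?_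
    split_ifs with h
    · exact hw0 e he
    · exact le_rfl
  have happly : ∀ θ q', x' θ q' = ∑ q ∈ (x θ).support, x θ q * y θ q q' := by
    intro θ q'
    simp only [hx', Finsupp.finset_sum_apply, Finsupp.smul_apply, smul_eq_mul]
  have hxv : ∀ θ θ', lsum (fun q => vfun u θ (Dq μ θ q)) (x' θ') =
      lsum (fun q => vfun u θ (Dq μ θ q)) (x θ') := by
    intro θ θ'
    rw [hx'lsum, lsum_eq_sum_subset (subset_refl (x θ').support)]
    refine Finset.sum_congr rfl fun q hq => ?_
    obtain ⟨-, -, -, -, -, hv⟩ := hEw θ' q hq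
    rw [show ∑ e ∈ Ef θ' q, vfun u θ (Dq μ θ e) * w θ' q e
        = ∑ e ∈ Ef θ' q, w θ' q e * vfun u θ (Dq μ θ e) from
      Finset.sum_congr rfl fun e _ => mul_comm _ _, hv θ]
    ring
  have htv : ∀ θ θ', lsum (onesD μ θ) (tt' θ') = lsum (onesD μ θ) (tt θ') := by
    intro θ θ'
    rw [htt'lsum, lsum_eq_sum_subset (hsupp θ')]
    refine Finset.sum_congr rfl fun q hq => ?_
    obtain ⟨-, -, -, -, hbary, -⟩ := hEw θ' q hq
    rw [show ∑ e ∈ Ef θ' q, onesD μ θ e * w θ' q e = ∑ e ∈ Ef θ' q, w θ' q e * onesD μ θ e from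
      Finset.sum_congr rfl fun e _ => mul_comm _ _, onesD_comb μ θ hbary]
    ring
  have hPO : ∀ θ θ', POutil u μ θ (x' θ') (tt' θ') = POutil u μ θ (x θ') (tt θ') := by
    intro θ θ'
    rw [POutil_eq, POutil_eq, hxv, htv]
  have hfeas' : ∀ θ, FeasRep (margO μ) (x' θ) := by
    intro θ
    refine ⟨?_, ?_, ?_, ?_⟩
    · intro q' hq'
      obtain ⟨q, hq, hq'E⟩ := hmem θ q' hq'
      exact ((hEw θ q hq).2.1) q' hq'E
    · intro q'
      rw [happly]
      exact Finset.sum_nonneg fun q hq => mul_nonneg ((hfeas θ).2.1 q) (hynn θ q hq q')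
    · have h1 : ∑ q' ∈ (x' θ).support, x' θ q' = lsum (fun _ => 1) (x' θ) := by
        rw [lsum_eq_sum_subset (subset_refl _)]
        exact Finset.sum_congr rfl fun q _ => (one_mul _).symm
      rw [h1, hx'lsum]
      have h2 : ∀ q ∈ (x θ).support, x θ q * ∑ e ∈ Ef θ q, (1:ℝ) * w θ q e = x θ q := by
        intro q hq
        obtain ⟨-, -, -, hw1, -, -⟩ := hEw θ q hq
        rw [Finset.sum_congr rfl fun e (_ : e ∈ Ef θ q) => one_mul (w θ q e), hw1, mul_one]
      rw [Finset.sum_congr rfl h2]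
      exact (hfeas θ).2.2.1
    · intro ω
      have h1 : ∑ q' ∈ (x' θ).support, x' θ q' * q' ω = lsum (fun q' => q' ω) (x' θ) := by
        rw [lsum_eq_sum_subset (subset_refl _)]
        exact Finset.sum_congr rfl fun q _ => mul_comm _ _
      rw [h1, hx'lsum]
      have h2 : ∀ q ∈ (x θ).support, x θ q * ∑ e ∈ Ef θ q, e ω * w θ q e = x θ q * q ω := by
        intro q hq
        obtain ⟨-, -, -, -, hbary, -⟩ := hEw θ q hq
        rw [Finset.sum_congr rfl fun e (_ : e ∈ Ef θ q) => mul_comm (e ω) (w θ q e), hbary ω]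
      rw [Finset.sum_congr rfl h2]
      exact (hfeas θ).2.2.2 ω
  have hsupp' : ∀ θ, (tt' θ).support ⊆ (x' θ).support := by
    intro θ q' hq'
    rw [Finsupp.mem_support_iff] at hq' ⊢
    simp only [htt', Finsupp.finset_sum_apply, Finsupp.smul_apply, smul_eq_mul] at hq'
    obtain ⟨q, hq, hne⟩ := Finset.exists_ne_zero_of_sum_ne_zero hq'
    have hyq : 0 < y θ q q' :=
      lt_of_le_of_ne (hynn θ q hq q') (fun h => hne (by rw [← h, mul_zero]))
    have hxq : 0 < x θ q :=
      lt_of_le_of_ne ((hfeas θ).2.1 q) (Ne.symm (Finsupp.mem_support_iff.1 hq))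
    have hpos : 0 < x' θ q' := by
      rw [happly]
      exact Finset.sum_pos' (fun r hr => mul_nonneg ((hfeas θ).2.1 r) (hynn θ r hr q'))
        ⟨q, hq, mul_pos hxq hyq⟩
    exact hpos.ne'
  refine ⟨x', tt', ⟨hfeas', hsupp', ?_, ?_⟩, ?_, ?_⟩
  · intro θ
    rw [hPO θ θ]
    exact hIR θ
  · intro θ θ' hne
    rw [hPO θ θ', hPO θ θ]
    exact hIC θ θ' hne
  · intro θ q' hq'
    obtain ⟨q, hq, hq'E⟩ := hmem θ q' hq'
    exact (hEw θ q hq).1 (Finset.mem_coe.mpr hq'E)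
  · rw [POrev_eq, POrev_eq]
    exact le_of_eq (Finset.sum_congr rfl fun θ _ => (htv θ θ).symm)

end
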